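/- Let G(x) be a q×q symmetric matrix with entries in ℝ[x_1,...,x_n], K = {x ∈ ℝ^n : G(x) ⪰ 0}, and let H(G) ⊆ ℝ[x_1,...,x_n] be the set of all polynomials of the form λ_0 + Σ_{k=1}^m ⟨Λ_k, G(x)^{⊗k}⟩ where m ∈ ℕ, λ_0 ≥ 0 is a real number, and each Λ_k is a q^k × q^k positive semidefinite real matrix. Let π(H(G)) be the convex set of linear functionals L : ℝ[x_1,...,x_n] → ℝ with L(1) = 1 and L(f) ≥ 0 for all f ∈ H(G). Suppose ℝ[x_1,...,x_n] = H(G) − H(G) and the constant polynomial 1 lies in the algebraic interior of H(G). Then for every extreme point L of π(H(G)) there exists a point u ∈ K such that L(f) = f(u) for all f ∈ ℝ[x_1,...,x_n]. -/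

import Mathlib

open scoped BigOperators

noncomputable section

/-- The `k`-fold Kronecker power of a matrix, with rows and columns indexed by
functions `Fin k → ι` (a type of cardinality `(#ι)^k`):
`(M^{⊗k})_{a,b} = ∏ᵢ M_{a i, b i}`. -/
def kronPow {ι : Type*} {R : Type*} [CommMonoid R] (M : Matrix ι ι R) (k : ℕ) :
    Matrix (Fin k → ι) (Fin k → ι) R :=
  Matrix.of fun a b => ∏ i, M (a i) (b i)

/-- Trace inner product `⟨Λ, B⟩ = tr(Λᵀ B) = ∑ᵢⱼ Λᵢⱼ Bᵢⱼ` of a real matrix against a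
polynomial matrix. -/
def tipP {n : ℕ} {ι : Type*} [Fintype ι] (Λ : Matrix ι ι ℝ)
    (B : Matrix ι ι (MvPolynomial (Fin n) ℝ)) : MvPolynomial (Fin n) ℝ :=
  ∑ i, ∑ j, MvPolynomial.C (Λ i j) * B i j

/-- The cone `H(G)` of all polynomials of the form
`λ₀ + ∑_{k=1}^m ⟨Λ_k, G(x)^{⊗k}⟩` with `λ₀ ≥ 0` and each `Λ_k` positive semidefinite. -/
def Hset {n : ℕ} {ι : Type*} [Fintype ι]
    (G : Matrix ι ι (MvPolynomial (Fin n) ℝ)) : Set (MvPolynomial (Fin n) ℝ) :=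
  { p | ∃ (m : ℕ) (lam0 : ℝ) (Λ : (k : ℕ) → Matrix (Fin k → ι) (Fin k → ι) ℝ),
      0 ≤ lam0 ∧ (∀ k ∈ Finset.Icc 1 m, (Λ k).PosSemidef) ∧
      p = MvPolynomial.C lam0 + ∑ k ∈ Finset.Icc 1 m, tipP (Λ k) (kronPow G k) }

namespace Hw

open MvPolynomial Matrix

variable {n : ℕ} {ι : Type*} [Fintype ι]

lemma tipP_zero (B : Matrix ι ι (MvPolynomial (Fin n) ℝ)) : tipP (0 : Matrix ι ι ℝ) B = 0 := by
  simp [tipP]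

lemma tipP_add (A A' : Matrix ι ι ℝ) (B : Matrix ι ι (MvPolynomial (Fin n) ℝ)) :
    tipP (A + A') B = tipP A B + tipP A' B := by
  simp [tipP, add_mul, Finset.sum_add_distrib]

lemma tipP_smul (c : ℝ) (A : Matrix ι ι ℝ) (B : Matrix ι ι (MvPolynomial (Fin n) ℝ)) :
    tipP (c • A) B = MvPolynomial.C c * tipP A B := by
  simp [tipP, Finset.mul_sum, _root_.map_mul, mul_assoc]

lemma psd_smul {m : Type*} [Fintype m] {A : Matrix m m ℝ} (hA : A.PosSemidef) {c : ℝ}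
    (hc : 0 ≤ c) : (c • A).PosSemidef := by
  refine Matrix.posSemidef_iff_dotProduct_mulVec.mpr ⟨?_, fun x => ?_⟩
  · rw [Matrix.IsHermitian, Matrix.conjTranspose_smul, star_trivial, hA.1]
  · rw [Matrix.smul_mulVec, dotProduct_smul]
    exact mul_nonneg hc (hA.dotProduct_mulVec_nonneg x)

variable (G : Matrix ι ι (MvPolynomial (Fin n) ℝ))

lemma Hset_const {a : ℝ} (ha : 0 ≤ a) : MvPolynomial.C a ∈ Hset G :=
  ⟨0, a, fun _ => 0, ha, by simp, by simp⟩

lemma Hset_zero : (0 : MvPolynomial (Fin n) ℝ) ∈ Hset G := by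
  simpa using Hset_const G (le_refl (0:ℝ))

lemma Hset_one : (1 : MvPolynomial (Fin n) ℝ) ∈ Hset G := by
  simpa using Hset_const G (zero_le_one (α := ℝ))

lemma sum_extend {m M : ℕ} (hm : m ≤ M) (Λ : (k : ℕ) → Matrix (Fin k → ι) (Fin k → ι) ℝ) :
    ∑ k ∈ Finset.Icc 1 m, tipP (Λ k) (kronPow G k)
      = ∑ k ∈ Finset.Icc 1 M, tipP (if k ≤ m then Λ k else 0) (kronPow G k) := by
  rw [← Finset.sum_subset (Finset.Icc_subset_Icc_right hm)]
  · refine Finset.sum_congr rfl fun k hk => ?_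
    rw [if_pos (Finset.mem_Icc.mp hk).2]
  · intro k _ hk2
    have : ¬ k ≤ m := by
      intro h
      exact hk2 (Finset.mem_Icc.mpr ⟨(Finset.mem_Icc.mp ‹k ∈ Finset.Icc 1 M›).1, h⟩)
    rw [if_neg this, tipP_zero]

lemma Hset_add {p r : MvPolynomial (Fin n) ℝ} (hp : p ∈ Hset G) (hr : r ∈ Hset G) :
    p + r ∈ Hset G := by
  obtain ⟨m1, a1, Λ1, ha1, hΛ1, rfl⟩ := hp
  obtain ⟨m2, a2, Λ2, ha2, hΛ2, rfl⟩ := hr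
  refine ⟨max m1 m2, a1 + a2,
    fun k => (if k ≤ m1 then Λ1 k else 0) + (if k ≤ m2 then Λ2 k else 0),
    add_nonneg ha1 ha2, ?_, ?_⟩
  · intro k hk
    have h1 : (if k ≤ m1 then Λ1 k else 0).PosSemidef := by
      split_ifs with h
      · exact hΛ1 k (Finset.mem_Icc.mpr ⟨(Finset.mem_Icc.mp hk).1, h⟩)
      · exact Matrix.PosSemidef.zero
    have h2 : (if k ≤ m2 then Λ2 k else 0).PosSemidef := by
      split_ifs with h
      · exact hΛ2 k (Finset.mem_Icc.mpr ⟨(Finset.mem_Icc.mp hk).1, h⟩)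
      · exact Matrix.PosSemidef.zero
    exact h1.add h2
  · rw [sum_extend G (le_max_left m1 m2) Λ1, sum_extend G (le_max_right m1 m2) Λ2]
    simp only [tipP_add, Finset.sum_add_distrib, map_add]
    ring

lemma Hset_sum {s : Finset α} {f : α → MvPolynomial (Fin n) ℝ}
    (hf : ∀ i ∈ s, f i ∈ Hset G) : ∑ i ∈ s, f i ∈ Hset G := by
  classical
  induction s using Finset.induction_on with
  | empty => simpa using Hset_zero G
  | insert _ _ hx ih =>
    rw [Finset.sum_insert hx]
    exact Hset_add G (hf _ (Finset.mem_insert_self _ _))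
      (ih fun i hi => hf i (Finset.mem_insert_of_mem hi))

lemma Hset_tip {k : ℕ} {Λ : Matrix (Fin k → ι) (Fin k → ι) ℝ} (hΛ : Λ.PosSemidef) :
    tipP Λ (kronPow G k) ∈ Hset G := by
  rcases Nat.eq_zero_or_pos k with rfl | hk
  · have h0 : tipP Λ (kronPow G 0) = MvPolynomial.C (Λ default default) := by
      simp [tipP, kronPow, Finset.univ_unique]
    rw [h0]
    refine Hset_const G ?_
    have := hΛ.dotProduct_mulVec_nonneg (fun _ => 1)
    simpa [dotProduct, Matrix.mulVec, Finset.univ_unique] using this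
  · refine ⟨k, 0, fun j => if h : j = k then h ▸ Λ else 0, le_refl 0, ?_, ?_⟩
    · intro j hj
      by_cases h : j = k
      · subst h; simpa using hΛ
      · simp [dif_neg h, Matrix.PosSemidef.zero]
    · rw [map_zero, zero_add, Finset.sum_eq_single_of_mem k (Finset.mem_Icc.mpr ⟨hk, le_refl k⟩)]
      · simp
      · intro j _ hj
        simp only [dif_neg hj, tipP_zero]


section Mix

variable {k l : ℕ}

/-- Mixed Kronecker product with flattened index type. -/
def mixMat (A : Matrix (Fin k → ι) (Fin k → ι) ℝ) (B : Matrix (Fin l → ι) (Fin l → ι) ℝ) :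
    Matrix (Fin (k + l) → ι) (Fin (k + l) → ι) ℝ :=
  Matrix.of fun u v =>
    A (fun i => u (Fin.castAdd l i)) (fun i => v (Fin.castAdd l i)) *
      B (fun j => u (Fin.natAdd k j)) (fun j => v (Fin.natAdd k j))

def splitEquiv (k l : ℕ) (ι : Type*) : (Fin (k + l) → ι) ≃ (Fin k → ι) × (Fin l → ι) where
  toFun u := (fun i => u (Fin.castAdd l i), fun j => u (Fin.natAdd k j))
  invFun p := Fin.append p.1 p.2
  left_inv u := by
    funext i
    refine Fin.addCases (fun i => ?_) (fun j => ?_) i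
    · exact Fin.append_left _ _ i
    · exact Fin.append_right _ _ j
  right_inv p := by
    ext i
    · exact Fin.append_left _ _ i
    · exact Fin.append_right _ _ i

lemma mixMat_posSemidef {A : Matrix (Fin k → ι) (Fin k → ι) ℝ}
    {B : Matrix (Fin l → ι) (Fin l → ι) ℝ} (hA : A.PosSemidef) (hB : B.PosSemidef) :
    (mixMat A B).PosSemidef := by
  obtain ⟨P, rfl⟩ : ∃ P : Matrix (Fin k → ι) (Fin k → ι) ℝ, A = Pᴴ * P := by
    classical
    open scoped MatrixOrder in exact CStarAlgebra.nonneg_iff_eq_star_mul_self.mp hA.nonneg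
  obtain ⟨Q, rfl⟩ : ∃ Q : Matrix (Fin l → ι) (Fin l → ι) ℝ, B = Qᴴ * Q := by
    classical
    open scoped MatrixOrder in exact CStarAlgebra.nonneg_iff_eq_star_mul_self.mp hB.nonneg
  have key : mixMat (Pᴴ * P) (Qᴴ * Q) =
      (Matrix.of fun (s : (Fin k → ι) × (Fin l → ι)) (u : Fin (k + l) → ι) =>
        P s.1 (fun i => u (Fin.castAdd l i)) * Q s.2 (fun j => u (Fin.natAdd k j)))ᴴ *
      (Matrix.of fun (s : (Fin k → ι) × (Fin l → ι)) (u : Fin (k + l) → ι) =>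
        P s.1 (fun i => u (Fin.castAdd l i)) * Q s.2 (fun j => u (Fin.natAdd k j))) := by
    ext u v
    simp only [mixMat, Matrix.mul_apply, Matrix.conjTranspose_apply, Matrix.of_apply,
      star_trivial, Fintype.sum_prod_type, Finset.sum_mul_sum]
    refine Finset.sum_congr rfl fun a _ => Finset.sum_congr rfl fun b _ => by ring
  rw [key]
  exact Matrix.posSemidef_conjTranspose_mul_self _

lemma kronPow_add_apply (u v : Fin (k + l) → ι) :
    kronPow G (k + l) u v =
      kronPow G k (fun i => u (Fin.castAdd l i)) (fun i => v (Fin.castAdd l i)) *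
        kronPow G l (fun j => u (Fin.natAdd k j)) (fun j => v (Fin.natAdd k j)) := by
  simp only [kronPow, Matrix.of_apply]
  exact Fin.prod_univ_add (f := fun i => G (u i) (v i))

lemma tipP_eq_sum_pairs {ι' : Type*} [Fintype ι'] (A : Matrix ι' ι' ℝ)
    (B : Matrix ι' ι' (MvPolynomial (Fin n) ℝ)) :
    tipP A B = ∑ p : ι' × ι', MvPolynomial.C (A p.1 p.2) * B p.1 p.2 := by
  rw [tipP]
  exact (Fintype.sum_prod_type (f := fun p : ι' × ι' =>
    MvPolynomial.C (A p.1 p.2) * B p.1 p.2)).symm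

set_option maxHeartbeats 1000000 in
lemma tipP_mul (A : Matrix (Fin k → ι) (Fin k → ι) ℝ) (B : Matrix (Fin l → ι) (Fin l → ι) ℝ) :
    tipP A (kronPow G k) * tipP B (kronPow G l) = tipP (mixMat A B) (kronPow G (k + l)) := by
  classical
  set E : ((Fin (k+l) → ι) × (Fin (k+l) → ι)) ≃
      (((Fin k → ι) × (Fin k → ι)) × ((Fin l → ι) × (Fin l → ι))) :=
    (Equiv.prodCongr (splitEquiv k l ι) (splitEquiv k l ι)).trans
      (Equiv.prodProdProdComm _ _ _ _) with hE
  have h1 : ∀ (x : Fin k → ι) (y : Fin l → ι),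
      (fun i => Fin.append x y (Fin.castAdd l i)) = x := by
    intro x y; funext i; exact Fin.append_left _ _ i
  have h2 : ∀ (x : Fin k → ι) (y : Fin l → ι),
      (fun j => Fin.append x y (Fin.natAdd k j)) = y := by
    intro x y; funext j; exact Fin.append_right _ _ j
  have key : ∀ w : ((Fin k → ι) × (Fin k → ι)) × ((Fin l → ι) × (Fin l → ι)),
      (MvPolynomial.C (A w.1.1 w.1.2) * kronPow G k w.1.1 w.1.2) *
        (MvPolynomial.C (B w.2.1 w.2.2) * kronPow G l w.2.1 w.2.2)
      = MvPolynomial.C (mixMat A B (E.symm w).1 (E.symm w).2) *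
          kronPow G (k+l) (E.symm w).1 (E.symm w).2 := by
    rintro ⟨⟨a, c⟩, ⟨b, d⟩⟩
    have hsymm : E.symm ((a, c), (b, d)) = (Fin.append a b, Fin.append c d) := rfl
    rw [hsymm]
    show (MvPolynomial.C (A a c) * kronPow G k a c) *
        (MvPolynomial.C (B b d) * kronPow G l b d)
      = MvPolynomial.C (mixMat A B (Fin.append a b) (Fin.append c d)) *
        kronPow G (k+l) (Fin.append a b) (Fin.append c d)
    rw [kronPow_add_apply, mixMat]
    simp only [Matrix.of_apply, h1, h2, _root_.map_mul]
    ring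
  calc tipP A (kronPow G k) * tipP B (kronPow G l)
      = ∑ p : (Fin k → ι) × (Fin k → ι), ∑ q : (Fin l → ι) × (Fin l → ι),
          (MvPolynomial.C (A p.1 p.2) * kronPow G k p.1 p.2) *
            (MvPolynomial.C (B q.1 q.2) * kronPow G l q.1 q.2) := by
        rw [tipP_eq_sum_pairs, tipP_eq_sum_pairs, Finset.sum_mul_sum]
    _ = ∑ w : ((Fin k → ι) × (Fin k → ι)) × ((Fin l → ι) × (Fin l → ι)),
          (MvPolynomial.C (A w.1.1 w.1.2) * kronPow G k w.1.1 w.1.2) *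
            (MvPolynomial.C (B w.2.1 w.2.2) * kronPow G l w.2.1 w.2.2) :=
        (Fintype.sum_prod_type (f := fun w : ((Fin k → ι) × (Fin k → ι)) × ((Fin l → ι) × (Fin l → ι)) =>
          (MvPolynomial.C (A w.1.1 w.1.2) * kronPow G k w.1.1 w.1.2) *
            (MvPolynomial.C (B w.2.1 w.2.2) * kronPow G l w.2.1 w.2.2))).symm
    _ = ∑ pr : (Fin (k+l) → ι) × (Fin (k+l) → ι),
          MvPolynomial.C (mixMat A B pr.1 pr.2) * kronPow G (k+l) pr.1 pr.2 :=
        Fintype.sum_equiv E.symm _ _ key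
    _ = tipP (mixMat A B) (kronPow G (k + l)) := (tipP_eq_sum_pairs _ _).symm

end Mix

lemma Hset_mul {p r : MvPolynomial (Fin n) ℝ} (hp : p ∈ Hset G) (hr : r ∈ Hset G) :
    p * r ∈ Hset G := by
  obtain ⟨m1, a1, Λ1, ha1, hΛ1, rfl⟩ := hp
  obtain ⟨m2, a2, Λ2, ha2, hΛ2, rfl⟩ := hr
  set S1 := ∑ k ∈ Finset.Icc 1 m1, tipP (Λ1 k) (kronPow G k) with hS1
  set S2 := ∑ k ∈ Finset.Icc 1 m2, tipP (Λ2 k) (kronPow G k) with hS2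
  have e1 : MvPolynomial.C a1 * S2 = ∑ k ∈ Finset.Icc 1 m2, tipP (a1 • Λ2 k) (kronPow G k) := by
    rw [hS2, Finset.mul_sum]
    exact Finset.sum_congr rfl fun k _ => (tipP_smul a1 (Λ2 k) (kronPow G k)).symm
  have e2 : S1 * MvPolynomial.C a2 = ∑ k ∈ Finset.Icc 1 m1, tipP (a2 • Λ1 k) (kronPow G k) := by
    rw [hS1, Finset.sum_mul]
    refine Finset.sum_congr rfl fun k _ => ?_
    rw [mul_comm, tipP_smul]
  have e3 : S1 * S2 = ∑ k ∈ Finset.Icc 1 m1, ∑ j ∈ Finset.Icc 1 m2,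
      tipP (mixMat (Λ1 k) (Λ2 j)) (kronPow G (k + j)) := by
    rw [hS1, hS2, Finset.sum_mul_sum]
    exact Finset.sum_congr rfl fun k _ => Finset.sum_congr rfl fun j _ => tipP_mul G _ _
  have expand : (MvPolynomial.C a1 + S1) * (MvPolynomial.C a2 + S2) =
      MvPolynomial.C (a1 * a2)
      + ((∑ k ∈ Finset.Icc 1 m2, tipP (a1 • Λ2 k) (kronPow G k))
      + ((∑ k ∈ Finset.Icc 1 m1, tipP (a2 • Λ1 k) (kronPow G k))
      + ∑ k ∈ Finset.Icc 1 m1, ∑ j ∈ Finset.Icc 1 m2,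
          tipP (mixMat (Λ1 k) (Λ2 j)) (kronPow G (k + j)))) := by
    rw [← e1, ← e2, ← e3, _root_.map_mul]
    ring
  rw [expand]
  refine Hset_add G (Hset_const G (mul_nonneg ha1 ha2)) (Hset_add G ?_ (Hset_add G ?_ ?_))
  · exact Hset_sum G fun j hj => Hset_tip G (psd_smul (hΛ2 j hj) ha1)
  · exact Hset_sum G fun j hj => Hset_tip G (psd_smul (hΛ1 j hj) ha2)
  · exact Hset_sum G fun k hk => Hset_sum G fun j hj =>
      Hset_tip G (mixMat_posSemidef (hΛ1 k hk) (hΛ2 j hj))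

lemma Hset_smul {c : ℝ} (hc : 0 ≤ c) {h : MvPolynomial (Fin n) ℝ} (hh : h ∈ Hset G) :
    MvPolynomial.C c * h ∈ Hset G := Hset_mul G (Hset_const G hc) hh

end Hw

/-- Entrywise evaluation of a polynomial matrix at a point `x`. -/
def evalMat {n : ℕ} {ι : Type*} (x : Fin n → ℝ)
    (B : Matrix ι ι (MvPolynomial (Fin n) ℝ)) : Matrix ι ι ℝ :=
  Matrix.of fun i j => MvPolynomial.eval x (B i j)

/-- Suppose `ℝ[x] = H(G) − H(G)` and `1` is an algebraic interior point of `H(G)`.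
Then every extreme point `L` of the convex set `π(H(G))` of linear functionals with
`L(1) = 1` and `L ≥ 0` on `H(G)` is an evaluation functional at some point
`u ∈ K = {x : G(x) ⪰ 0}`. -/
theorem extreme_point_is_evaluation {n q : ℕ}
    (G : Matrix (Fin q) (Fin q) (MvPolynomial (Fin n) ℝ)) (hG : G.IsSymm)
    (hspan : ∀ p : MvPolynomial (Fin n) ℝ,
      ∃ h1 ∈ Hset G, ∃ h2 ∈ Hset G, p = h1 - h2)
    (halg : ∀ f : MvPolynomial (Fin n) ℝ, ∃ ε : ℝ, 0 < ε ∧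
      ∀ lam : ℝ, |lam| < ε → 1 + MvPolynomial.C lam * f ∈ Hset G)
    (L : MvPolynomial (Fin n) ℝ →ₗ[ℝ] ℝ)
    (hL : L ∈ Set.extremePoints ℝ
      {L' : MvPolynomial (Fin n) ℝ →ₗ[ℝ] ℝ | L' 1 = 1 ∧ ∀ f ∈ Hset G, 0 ≤ L' f}) :
    ∃ u : Fin n → ℝ, (evalMat u G).PosSemidef ∧
      ∀ f : MvPolynomial (Fin n) ℝ, L f = MvPolynomial.eval u f := by
  classical
  obtain ⟨⟨hLone, hLpos⟩, hext⟩ := hL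
  -- a nonnegative functional vanishing at 1 vanishes identically
  have degenerate : ∀ M : MvPolynomial (Fin n) ℝ →ₗ[ℝ] ℝ,
      (∀ t ∈ Hset G, 0 ≤ M t) → M 1 = 0 → ∀ f', M f' = 0 := by
    intro M hMpos hM1 f'
    obtain ⟨δ, hδ, hb⟩ := halg f'
    have habs : |δ/2| < δ := by rw [abs_of_pos (by positivity)]; linarith
    have habs' : |(-(δ/2))| < δ := by rw [abs_neg]; exact habs
    have e1 : M (1 + MvPolynomial.C (δ/2) * f') = (δ/2) * M f' := by
      rw [map_add, hM1, zero_add, ← MvPolynomial.smul_eq_C_mul, map_smul, smul_eq_mul]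
    have e2 : M (1 + MvPolynomial.C (-(δ/2)) * f') = -((δ/2) * M f') := by
      rw [map_add, hM1, zero_add, ← MvPolynomial.smul_eq_C_mul, map_smul, smul_eq_mul]
      ring
    have p1 := hMpos _ (hb (δ/2) habs)
    have p2 := hMpos _ (hb (-(δ/2)) habs')
    rw [e1] at p1
    rw [e2] at p2
    have hz : (δ/2) * M f' = 0 := le_antisymm (by linarith) p1
    have hδ2 : (δ/2) ≠ 0 := by positivity
    exact (mul_eq_zero.mp hz).resolve_left hδ2
  -- multiplicativity against elements of Hset
  have key : ∀ h ∈ Hset G, ∀ f : MvPolynomial (Fin n) ℝ, L (h * f) = L h * L f := by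
    intro h hh f
    obtain ⟨ε, hε, hball⟩ := halg h
    set g : MvPolynomial (Fin n) ℝ := MvPolynomial.C (ε/2) * h with hg_def
    have hg : g ∈ Hset G := Hw.Hset_smul G (by positivity) hh
    have hg' : 1 - g ∈ Hset G := by
      have hmem := hball (-(ε/2)) (by rw [abs_neg, abs_of_pos (by positivity)]; linarith)
      have heq : 1 + MvPolynomial.C (-(ε/2)) * h = 1 - g := by
        rw [hg_def, map_neg, neg_mul]; ring
      rwa [heq] at hmem
    set L1 : MvPolynomial (Fin n) ℝ →ₗ[ℝ] ℝ := L.comp (LinearMap.mulLeft ℝ g) with hL1def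
    have hL1app : ∀ f', L1 f' = L (g * f') := fun _ => rfl
    set L2 : MvPolynomial (Fin n) ℝ →ₗ[ℝ] ℝ := L - L1 with hL2def
    have hL2app : ∀ f', L2 f' = L ((1 - g) * f') := by
      intro f'
      rw [sub_mul, one_mul, map_sub, ← hL1app]
      simp [hL2def]
    have pos1 : ∀ t ∈ Hset G, 0 ≤ L1 t := fun t ht => by
      rw [hL1app]; exact hLpos _ (Hw.Hset_mul G hg ht)
    have pos2 : ∀ t ∈ Hset G, 0 ≤ L2 t := fun t ht => by
      rw [hL2app]; exact hLpos _ (Hw.Hset_mul G hg' ht)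
    have hL1one : L1 1 = L g := by rw [hL1app, mul_one]
    have hL2one : L2 1 = 1 - L g := by
      have : L2 1 = L 1 - L1 1 := by simp [hL2def]
      rw [this, hLone, hL1one]
    have hc0 : 0 ≤ L g := hL1one ▸ pos1 1 (Hw.Hset_one G)
    have hc1 : L g ≤ 1 := by
      have := pos2 1 (Hw.Hset_one G)
      rw [hL2one] at this; linarith
    have hmul_g : L (g * f) = L g * L f := by
      rcases eq_or_lt_of_le hc0 with hczero | hcpos
      · have h0 := degenerate L1 pos1 (by rw [hL1one, ← hczero])
        have := h0 f
        rw [hL1app] at this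
        rw [this, ← hczero, zero_mul]
      rcases eq_or_lt_of_le hc1 with hcone | hclt
      · have h0 := degenerate L2 pos2 (by rw [hL2one, hcone, sub_self])
        have := h0 f
        rw [hL2app, sub_mul, one_mul, map_sub, sub_eq_zero] at this
        rw [hcone, one_mul]
        exact this.symm
      · set c := L g with hc
        set A := c⁻¹ • L1 with hA
        set B := (1 - c)⁻¹ • L2 with hB
        have hcne : c ≠ 0 := ne_of_gt hcpos
        have hcne' : (1 - c) ≠ 0 := by intro hcc; rw [sub_eq_zero] at hcc; exact (ne_of_lt hclt) hcc.symm
        have hAmem : A 1 = 1 ∧ ∀ f' ∈ Hset G, 0 ≤ A f' := by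
          constructor
          · rw [hA]; simp [hL1one, inv_mul_cancel₀ hcne]
          · intro t ht
            rw [hA]
            simp only [LinearMap.smul_apply, smul_eq_mul]
            exact mul_nonneg (inv_nonneg.mpr (le_of_lt hcpos)) (pos1 t ht)
        have hBmem : B 1 = 1 ∧ ∀ f' ∈ Hset G, 0 ≤ B f' := by
          constructor
          · rw [hB]; simp [hL2one, inv_mul_cancel₀ hcne']
          · intro t ht
            rw [hB]
            simp only [LinearMap.smul_apply, smul_eq_mul]
            exact mul_nonneg (inv_nonneg.mpr (by linarith)) (pos2 t ht)
        have hseg : L ∈ openSegment ℝ A B := by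
          refine ⟨c, 1 - c, hcpos, by linarith, by ring, ?_⟩
          rw [hA, hB, smul_smul, smul_smul, mul_inv_cancel₀ hcne, mul_inv_cancel₀ hcne',
            one_smul, one_smul, hL2def]
          abel
        have hAL := hext hAmem hBmem hseg
        have hL1c : L1 = c • L := by
          rw [← hAL, hA, smul_smul, mul_inv_cancel₀ hcne, one_smul]
        have := congrArg (fun T : MvPolynomial (Fin n) ℝ →ₗ[ℝ] ℝ => T f) hL1c
        simp only [LinearMap.smul_apply, smul_eq_mul] at this
        rw [← hL1app, this]
    -- cancel the factor ε/2
    have lhs : L (g * f) = (ε/2) * L (h * f) := by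
      rw [hg_def, mul_assoc, ← MvPolynomial.smul_eq_C_mul, map_smul, smul_eq_mul]
    have rhsg : L g = (ε/2) * L h := by
      rw [hg_def, ← MvPolynomial.smul_eq_C_mul, map_smul, smul_eq_mul]
    rw [lhs, rhsg, mul_assoc] at hmul_g
    exact mul_left_cancel₀ (by positivity) hmul_g
  -- full multiplicativity
  have mult : ∀ p f : MvPolynomial (Fin n) ℝ, L (p * f) = L p * L f := by
    intro p f
    obtain ⟨h1, hh1, h2, hh2, rfl⟩ := hspan p
    rw [sub_mul, map_sub, key h1 hh1 f, key h2 hh2 f, map_sub, sub_mul]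
  set u : Fin n → ℝ := fun i => L (MvPolynomial.X i) with hu
  have heval : ∀ f : MvPolynomial (Fin n) ℝ, L f = MvPolynomial.eval u f := by
    intro f
    induction f using MvPolynomial.induction_on with
    | C a =>
      have hCa : (MvPolynomial.C a : MvPolynomial (Fin n) ℝ) = a • 1 := by
        rw [MvPolynomial.smul_eq_C_mul, mul_one]
      rw [MvPolynomial.eval_C, hCa, map_smul, smul_eq_mul, hLone, mul_one]
    | add p r hp hr => rw [map_add, map_add, hp, hr]
    | mul_X p i hp =>
      rw [mult p (MvPolynomial.X i), hp, MvPolynomial.eval_mul, MvPolynomial.eval_X]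
  refine ⟨u, Matrix.posSemidef_iff_dotProduct_mulVec.mpr ⟨?_, ?_⟩, heval⟩
  · -- Hermitian
    ext i j
    simp only [Matrix.conjTranspose_apply, evalMat, Matrix.of_apply, star_trivial]
    congr 1
    exact hG.apply i j
  · -- quadratic form
    intro v
    set Λv : Matrix (Fin 1 → Fin q) (Fin 1 → Fin q) ℝ :=
      Matrix.of fun a b => v (a 0) * v (b 0) with hΛv
    have hΛvpsd : Λv.PosSemidef := by
      refine Matrix.posSemidef_iff_dotProduct_mulVec.mpr ⟨?_, ?_⟩
      · ext a b
        simp only [Matrix.conjTranspose_apply, hΛv, Matrix.of_apply, star_trivial]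
        ring
      · intro x
        have hq : dotProduct (star x) (Λv.mulVec x)
            = (∑ a, x a * v (a 0)) * (∑ b, v (b 0) * x b) := by
          calc dotProduct (star x) (Λv.mulVec x)
              = ∑ a, ∑ b, x a * (v (a 0) * v (b 0) * x b) := by
                simp [dotProduct, Matrix.mulVec, hΛv, Finset.mul_sum]
            _ = (∑ a, x a * v (a 0)) * (∑ b, v (b 0) * x b) := by
                rw [Finset.sum_mul_sum]
                exact Finset.sum_congr rfl fun a _ => Finset.sum_congr rfl fun b _ => by ring
        rw [hq]
        have hcomm : (∑ b, v (b 0) * x b) = ∑ a, x a * v (a 0) := by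
          exact Finset.sum_congr rfl fun b _ => by ring
        rw [hcomm]
        exact mul_self_nonneg _
    have hmem := Hw.Hset_tip G hΛvpsd
    have hnn : 0 ≤ L (tipP Λv (kronPow G 1)) := hLpos _ hmem
    rw [heval] at hnn
    have hre : ∀ (F : (Fin 1 → Fin q) → ℝ), (∑ a, F a) = ∑ i : Fin q, F (fun _ => i) := by
      intro F
      exact (Fintype.sum_equiv (Equiv.funUnique (Fin 1) (Fin q)).symm
        (fun i => F (fun _ => i)) F (fun i => rfl)).symm
    have hcompute : MvPolynomial.eval u (tipP Λv (kronPow G 1))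
        = dotProduct (star v) ((evalMat u G).mulVec v) := by
      simp only [tipP, map_sum, _root_.map_mul, MvPolynomial.eval_C, kronPow, Matrix.of_apply,
        Fin.prod_univ_one, hΛv, dotProduct, Matrix.mulVec, evalMat, star_trivial,
        Finset.mul_sum]
      rw [hre]
      refine Finset.sum_congr rfl fun i _ => ?_
      rw [hre (fun b => v i * v (b 0) * MvPolynomial.eval u (G i (b 0)))]
      refine Finset.sum_congr rfl fun j _ => by ring
    rw [hcompute] at hnn
    exact hnn


end
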